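/- arXiv:1402.3396 — 2 statements merged into one kernel-verified Lean document; each statement's English description precedes it below -/
import Mathlib

section
/- Let $A, B$ be nonzero complex numbers with $|A| \leq |B|(1-\gamma)$ for some $\gamma \in (0,1)$, let $\gamma_0 > 0$, and let $g(X,Y) = (AX + R(X,Y), BY + U(X,Y))$ be a $C^1$ map on a ball $B(0,r) \subset \mathbb{C}^2$ with $g(0,0) = (0,0)$. Set $\|Dh\| := \sup_{z \in B(0,r)} \max(\|DR(z)\|, \|DU(z)\|)$ and assume $\|Dh\| |B|^{-1}(1+\gamma_0) < 1$. Let $\Phi: D \to \mathbb{C}$, $D \subset \mathbb{C}$, be $\gamma_0$-Lipschitz with graph $\{(\Phi(Y), Y): Y \in D\} \subset B(0,r)$. Then the image of this graph under $g$ is again a graph $\{(\Psi(Y), Y)\}$ over the projection of the image to the second coordinate, and $\Psi$ is Lipschitz with constant at most $(|A|\gamma_0 + \|Dh\|(1+\gamma_0))/(|B| - \|Dh\|(1+\gamma_0))$. -/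
open Metric

/-- The graph `{(Φ Y, Y) : Y ∈ D}` of a function over the second coordinate. -/
def graphOf (Φ : ℂ → ℂ) (D : Set ℂ) : Set (ℂ × ℂ) :=
  (fun Y => ((Φ Y, Y) : ℂ × ℂ)) '' D

/-- Graph transform theorem (main part, Theorem 4.1 of the paper): under the hypotheses on
`g(X,Y) = (AX + R(X,Y), BY + U(X,Y))`, the image of a `γ₀`-Lipschitz graph over the second
coordinate is again a graph over the projection of the image to the second coordinate, with
Lipschitz constant at most `(|A|γ₀ + ‖Dh‖(1+γ₀))/(|B| - ‖Dh‖(1+γ₀))`. -/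
theorem stmt4 (A B : ℂ) (hA : A ≠ 0) (hB : B ≠ 0) (γ γ₀ r Dh : ℝ)
    (hγ : γ ∈ Set.Ioo (0:ℝ) 1) (hγ₀ : 0 < γ₀) (hr : 0 < r) (hDh0 : 0 ≤ Dh)
    (hAB : ‖A‖ ≤ ‖B‖ * (1 - γ))
    (R U : ℂ × ℂ → ℂ)
    (hR : ContDiffOn ℂ 1 R (ball 0 r)) (hU : ContDiffOn ℂ 1 U (ball 0 r))
    (hR0 : R 0 = 0) (hU0 : U 0 = 0)
    (g : ℂ × ℂ → ℂ × ℂ) (hg : ∀ z, g z = (A * z.1 + R z, B * z.2 + U z))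
    (hDh : ∀ z ∈ ball (0 : ℂ × ℂ) r, ‖fderiv ℂ R z‖ ≤ Dh ∧ ‖fderiv ℂ U z‖ ≤ Dh)
    (hsmall : Dh * ‖B‖⁻¹ * (1 + γ₀) < 1)
    (Φ : ℂ → ℂ) (D : Set ℂ)
    (hΦ : ∀ Y₁ ∈ D, ∀ Y₂ ∈ D, ‖Φ Y₁ - Φ Y₂‖ ≤ γ₀ * ‖Y₁ - Y₂‖)
    (hgraph : graphOf Φ D ⊆ ball 0 r) :
    ∃ Ψ : ℂ → ℂ,
      g '' graphOf Φ D = graphOf Ψ (Prod.snd '' (g '' graphOf Φ D)) ∧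
      ∀ Y₁ ∈ Prod.snd '' (g '' graphOf Φ D), ∀ Y₂ ∈ Prod.snd '' (g '' graphOf Φ D),
        ‖Ψ Y₁ - Ψ Y₂‖ ≤ (‖A‖ * γ₀ + Dh * (1 + γ₀)) / (‖B‖ - Dh * (1 + γ₀)) * ‖Y₁ - Y₂‖ := by
  have hBpos : (0:ℝ) < ‖B‖ := norm_pos_iff.mpr hB
  set K : ℝ := Dh * (1 + γ₀) with hKdef
  have hK0 : 0 ≤ K := mul_nonneg hDh0 (by linarith)
  have hKB : K < ‖B‖ := by
    have h := mul_lt_mul_of_pos_right hsmall hBpos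
    have hB' : ‖B‖⁻¹ * ‖B‖ = 1 := inv_mul_cancel₀ (ne_of_gt hBpos)
    nlinarith [hB']
  -- mean value estimate
  have key : ∀ f : ℂ × ℂ → ℂ, ContDiffOn ℂ 1 f (ball 0 r) →
      (∀ z ∈ ball (0:ℂ × ℂ) r, ‖fderiv ℂ f z‖ ≤ Dh) →
      ∀ p ∈ ball (0:ℂ × ℂ) r, ∀ q ∈ ball (0:ℂ × ℂ) r, ‖f p - f q‖ ≤ Dh * ‖p - q‖ := by
    intro f hf hbound p hp q hq
    have hdiff : ∀ z ∈ ball (0:ℂ × ℂ) r, DifferentiableAt ℂ f z := fun z hz =>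
      (hf.differentiableOn one_ne_zero).differentiableAt (isOpen_ball.mem_nhds hz)
    exact (convex_ball (0:ℂ × ℂ) r).norm_image_sub_le_of_norm_fderiv_le hdiff hbound hq hp
  -- points on the graph
  have hmem : ∀ Y ∈ D, ((Φ Y, Y) : ℂ × ℂ) ∈ ball (0:ℂ × ℂ) r := fun Y hY =>
    hgraph ⟨Y, hY, rfl⟩
  have hpair : ∀ Y₁ ∈ D, ∀ Y₂ ∈ D,
      ‖((Φ Y₁, Y₁) : ℂ × ℂ) - (Φ Y₂, Y₂)‖ ≤ (1 + γ₀) * ‖Y₁ - Y₂‖ := by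
    intro Y₁ h₁ Y₂ h₂
    have := hΦ Y₁ h₁ Y₂ h₂
    have hnn : (0:ℝ) ≤ ‖Y₁ - Y₂‖ := norm_nonneg _
    rw [Prod.norm_def]
    simp only [Prod.fst_sub, Prod.snd_sub]
    apply max_le <;> [nlinarith; nlinarith]
  set π : ℂ → ℂ := fun Y => B * Y + U (Φ Y, Y) with hπdef
  set F : ℂ → ℂ := fun Y => A * Φ Y + R (Φ Y, Y) with hFdef
  -- expansion of π
  have hexp : ∀ Y₁ ∈ D, ∀ Y₂ ∈ D, (‖B‖ - K) * ‖Y₁ - Y₂‖ ≤ ‖π Y₁ - π Y₂‖ := by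
    intro Y₁ h₁ Y₂ h₂
    have hu : ‖U (Φ Y₁, Y₁) - U (Φ Y₂, Y₂)‖ ≤ Dh * ((1 + γ₀) * ‖Y₁ - Y₂‖) := by
      refine le_trans (key U hU (fun z hz => (hDh z hz).2) _ (hmem Y₁ h₁) _ (hmem Y₂ h₂)) ?_
      exact mul_le_mul_of_nonneg_left (hpair Y₁ h₁ Y₂ h₂) hDh0
    have heq : B * Y₁ - B * Y₂ = (π Y₁ - π Y₂) - (U (Φ Y₁, Y₁) - U (Φ Y₂, Y₂)) := by
      simp only [hπdef]; ring
    have h1 : ‖B * Y₁ - B * Y₂‖ ≤ ‖π Y₁ - π Y₂‖ + ‖U (Φ Y₁, Y₁) - U (Φ Y₂, Y₂)‖ := by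
      rw [heq]; exact norm_sub_le _ _
    have h2 : ‖B * Y₁ - B * Y₂‖ = ‖B‖ * ‖Y₁ - Y₂‖ := by
      rw [← mul_sub, norm_mul]
    have hKdef' : K = Dh * (1 + γ₀) := hKdef
    nlinarith [norm_nonneg (Y₁ - Y₂)]
  have hπinj : Set.InjOn π D := by
    intro Y₁ h₁ Y₂ h₂ h
    have := hexp Y₁ h₁ Y₂ h₂
    rw [h, sub_self, norm_zero] at this
    have : ‖Y₁ - Y₂‖ ≤ 0 := by nlinarith
    have : Y₁ - Y₂ = 0 := norm_le_zero_iff.mp this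
    exact sub_eq_zero.mp this
  set ι : ℂ → ℂ := Function.invFunOn π D with hιdef
  have hι : ∀ Y ∈ D, ι (π Y) = Y := fun Y hY => hπinj.leftInvOn_invFunOn hY
  have him : g '' graphOf Φ D = (fun Y => (F Y, π Y)) '' D := by
    rw [graphOf, Set.image_image]
    apply Set.image_congr
    intro Y _
    simp [hg, hFdef, hπdef]
  have hsnd : Prod.snd '' (g '' graphOf Φ D) = π '' D := by
    rw [him, Set.image_image]
  refine ⟨fun w => F (ι w), ?_, ?_⟩
  · -- set equality
    rw [hsnd, him, graphOf, Set.image_image]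
    apply Set.image_congr
    intro Y hY
    simp only [hι Y hY]
  · -- Lipschitz estimate
    intro w₁ hw₁ w₂ hw₂
    rw [hsnd] at hw₁ hw₂
    obtain ⟨Y₁, hY₁, rfl⟩ := hw₁
    obtain ⟨Y₂, hY₂, rfl⟩ := hw₂
    simp only [hι Y₁ hY₁, hι Y₂ hY₂]
    have hr' : ‖R (Φ Y₁, Y₁) - R (Φ Y₂, Y₂)‖ ≤ Dh * ((1 + γ₀) * ‖Y₁ - Y₂‖) := by
      refine le_trans (key R hR (fun z hz => (hDh z hz).1) _ (hmem Y₁ hY₁) _ (hmem Y₂ hY₂)) ?_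
      exact mul_le_mul_of_nonneg_left (hpair Y₁ hY₁ Y₂ hY₂) hDh0
    have hnum : ‖F Y₁ - F Y₂‖ ≤ (‖A‖ * γ₀ + K) * ‖Y₁ - Y₂‖ := by
      have heq : F Y₁ - F Y₂ = A * (Φ Y₁ - Φ Y₂) + (R (Φ Y₁, Y₁) - R (Φ Y₂, Y₂)) := by
        simp only [hFdef]; ring
      have h1 : ‖A * (Φ Y₁ - Φ Y₂)‖ ≤ ‖A‖ * (γ₀ * ‖Y₁ - Y₂‖) := by
        rw [norm_mul]
        exact mul_le_mul_of_nonneg_left (hΦ Y₁ hY₁ Y₂ hY₂) (norm_nonneg A)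
      calc ‖F Y₁ - F Y₂‖ ≤ ‖A * (Φ Y₁ - Φ Y₂)‖ + ‖R (Φ Y₁, Y₁) - R (Φ Y₂, Y₂)‖ := by
            rw [heq]; exact norm_add_le _ _
        _ ≤ (‖A‖ * γ₀ + K) * ‖Y₁ - Y₂‖ := by
            have hKdef' : K = Dh * (1 + γ₀) := hKdef
            nlinarith [norm_nonneg (Y₁ - Y₂)]
    have hden := hexp Y₁ hY₁ Y₂ hY₂
    have hN0 : 0 ≤ ‖A‖ * γ₀ + K := by positivity
    rw [div_mul_eq_mul_div, le_div_iff₀ (by linarith : (0:ℝ) < ‖B‖ - K)]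
    nlinarith [mul_le_mul_of_nonneg_right hnum (by linarith : (0:ℝ) ≤ ‖B‖ - K),
      mul_le_mul_of_nonneg_left hden hN0]
end

section
/- Under the hypotheses of the graph transform theorem, assume additionally that $B(0, \alpha) \subset D$ and $\|\Phi(0)\| \leq \beta$. Then the projection to the second coordinate of $g(\text{graph of } \Phi)$ contains the ball $B(0, (|B| - \|Dh\|(1+\gamma_0))\alpha - |A|\beta - \|Dh\|\beta - M\beta^2)$, where $M = \|D^2 g\|_{B(0,r)}$, and the new graph function $\Psi$ satisfies $\|\Psi(0)\| \leq (1+\gamma_0)(|A|\beta + \|Dh\|\beta + M\beta^2)$, provided $\|Dh\|$ is sufficiently small depending only on $\gamma_0$ and $\gamma$. -/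
open Metric

lemma lip_aux {r Dh : ℝ} {f : ℂ × ℂ → ℂ} (hf : ContDiffOn ℂ 2 f (ball 0 r))
    (hb : ∀ z ∈ ball (0 : ℂ × ℂ) r, ‖fderiv ℂ f z‖ ≤ Dh) :
    ∀ p ∈ ball (0 : ℂ × ℂ) r, ∀ q ∈ ball (0 : ℂ × ℂ) r, ‖f p - f q‖ ≤ Dh * ‖p - q‖ := by
  intro p hp q hq
  exact Convex.norm_image_sub_le_of_norm_fderiv_le
    (fun x hx => (hf.differentiableOn (by norm_num) x hx).differentiableAt
      (isOpen_ball.mem_nhds hx))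
    hb (convex_ball 0 r) hq hp

set_option maxHeartbeats 4000000 in
/-- Size-control part of the graph transform theorem (Theorem 4.1): if moreover
`B(0,α) ⊆ D` and `‖Φ 0‖ ≤ β`, then — provided `‖Dh‖` is small enough depending only on
`γ₀` and `γ` — the projection to the second coordinate of `g(graph Φ)` contains the ball
`B(0, (|B| - ‖Dh‖(1+γ₀))α - |A|β - ‖Dh‖β - Mβ²)` with `M = ‖D²g‖`, and the new graph
function `Ψ` satisfies `‖Ψ 0‖ ≤ (1+γ₀)(|A|β + ‖Dh‖β + Mβ²)`. -/
theorem stmt5 (γ γ₀ : ℝ) (hγ : γ ∈ Set.Ioo (0:ℝ) 1) (hγ₀ : 0 < γ₀) :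
    ∃ ε : ℝ, 0 < ε ∧
      ∀ (A B : ℂ), A ≠ 0 → B ≠ 0 →
      ∀ (r Dh α β M : ℝ), 0 < r → 0 ≤ Dh → 0 < α → 0 ≤ β → 0 ≤ M →
      γ ≤ ‖A‖ → ‖A‖ ≤ ‖B‖ * (1 - γ) →
      ∀ (R U : ℂ × ℂ → ℂ),
        ContDiffOn ℂ 2 R (ball 0 r) → ContDiffOn ℂ 2 U (ball 0 r) →
        R 0 = 0 → U 0 = 0 →
      ∀ g : ℂ × ℂ → ℂ × ℂ, (∀ z, g z = (A * z.1 + R z, B * z.2 + U z)) →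
        (∀ z ∈ ball (0 : ℂ × ℂ) r, ‖fderiv ℂ R z‖ ≤ Dh ∧ ‖fderiv ℂ U z‖ ≤ Dh) →
        Dh * ‖B‖⁻¹ * (1 + γ₀) < 1 →
        (∀ z ∈ ball (0 : ℂ × ℂ) r, ‖iteratedFDeriv ℂ 2 g z‖ ≤ M) →
      ∀ (Φ : ℂ → ℂ) (D : Set ℂ),
        (∀ Y₁ ∈ D, ∀ Y₂ ∈ D, ‖Φ Y₁ - Φ Y₂‖ ≤ γ₀ * ‖Y₁ - Y₂‖) →
        graphOf Φ D ⊆ ball 0 r →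
        ball (0 : ℂ) α ⊆ D → ‖Φ 0‖ ≤ β →
        Dh ≤ ε →
      ∃ Ψ : ℂ → ℂ,
        g '' graphOf Φ D = graphOf Ψ (Prod.snd '' (g '' graphOf Φ D)) ∧
        ball (0 : ℂ) ((‖B‖ - Dh * (1 + γ₀)) * α - ‖A‖ * β - Dh * β - M * β ^ 2)
          ⊆ Prod.snd '' (g '' graphOf Φ D) ∧
        ‖Ψ 0‖ ≤ (1 + γ₀) * (‖A‖ * β + Dh * β + M * β ^ 2) := by
  classical
  obtain ⟨hγpos, hγlt⟩ := hγ
  have hmpos : 0 < min γ₀ 1 := lt_min hγ₀ one_pos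
  have hm1 : min γ₀ 1 ≤ 1 := min_le_right _ _
  have hmγ₀ : min γ₀ 1 ≤ γ₀ := min_le_left _ _
  have hγ₀' : (0:ℝ) < 1 + γ₀ := by linarith
  refine ⟨γ * min γ₀ 1 / (4 * (1 + γ₀)), by positivity, ?_⟩
  intro A B hA hB r Dh α β M hr hDh hα hβ hM hγA hAB R U hRc hUc hR0 hU0 g hg hDb
    hsmall hM2 Φ D hlip hgr hbD hΦ0 hDhε
  have hApos : 0 < ‖A‖ := norm_pos_iff.mpr hA
  have hBpos : 0 < ‖B‖ := norm_pos_iff.mpr hB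
  have hAB' : ‖A‖ ≤ ‖B‖ := le_trans hAB (by nlinarith)
  have hBγ : γ ≤ ‖B‖ := le_trans hγA hAB'
  -- quantitative smallness facts
  have hε1 : Dh * (1 + γ₀) ≤ γ / 4 := by
    have h1 := mul_le_mul_of_nonneg_right hDhε hγ₀'.le
    have h2 : γ * min γ₀ 1 / (4 * (1 + γ₀)) * (1 + γ₀) = γ * min γ₀ 1 / 4 := by
      field_simp
    rw [h2] at h1
    nlinarith
  have hDh4 : Dh ≤ γ / 4 := by nlinarith
  have hε2 : Dh ^ 2 * (1 + γ₀) ≤ γ₀ * γ ^ 2 / 16 := by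
    have h1 : Dh ^ 2 * (1 + γ₀) ≤ (γ * min γ₀ 1 / (4 * (1 + γ₀))) ^ 2 * (1 + γ₀) :=
      mul_le_mul_of_nonneg_right (pow_le_pow_left₀ hDh hDhε 2) hγ₀'.le
    have h2 : (γ * min γ₀ 1 / (4 * (1 + γ₀))) ^ 2 * (1 + γ₀)
        = γ ^ 2 * (min γ₀ 1) ^ 2 / (16 * (1 + γ₀)) := by
      field_simp; ring
    have h3 : γ ^ 2 * (min γ₀ 1) ^ 2 / (16 * (1 + γ₀)) ≤ γ ^ 2 * γ₀ / 16 := by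
      have h16 : (16:ℝ) ≤ 16 * (1 + γ₀) := by nlinarith
      gcongr
      nlinarith
    calc Dh ^ 2 * (1 + γ₀) ≤ (γ * min γ₀ 1 / (4 * (1 + γ₀))) ^ 2 * (1 + γ₀) := h1
      _ = γ ^ 2 * (min γ₀ 1) ^ 2 / (16 * (1 + γ₀)) := h2
      _ ≤ γ ^ 2 * γ₀ / 16 := h3
      _ = γ₀ * γ ^ 2 / 16 := by ring
  have hcB : 3 / 4 * ‖B‖ ≤ ‖B‖ - Dh * (1 + γ₀) := by nlinarith
  have hcpos : 0 < ‖B‖ - Dh * (1 + γ₀) := by nlinarith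
  -- Lipschitz estimates
  have lipR := lip_aux hRc (fun z hz => (hDb z hz).1)
  have lipU := lip_aux hUc (fun z hz => (hDb z hz).2)
  have hmem : ∀ Y ∈ D, ((Φ Y, Y) : ℂ × ℂ) ∈ ball (0 : ℂ × ℂ) r :=
    fun Y hY => hgr ⟨Y, hY, rfl⟩
  have h0D : (0:ℂ) ∈ D := hbD (mem_ball_self hα)
  have h0r : (0 : ℂ × ℂ) ∈ ball (0 : ℂ × ℂ) r := mem_ball_self hr
  have hpair : ∀ Y₁ ∈ D, ∀ Y₂ ∈ D,
      ‖((Φ Y₁, Y₁) : ℂ × ℂ) - (Φ Y₂, Y₂)‖ ≤ (1 + γ₀) * ‖Y₁ - Y₂‖ := by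
    intro Y₁ h₁ Y₂ h₂
    rw [Prod.mk_sub_mk, Prod.norm_def]
    have hn : (0:ℝ) ≤ ‖Y₁ - Y₂‖ := norm_nonneg _
    apply max_le
    · have := hlip Y₁ h₁ Y₂ h₂; nlinarith
    · nlinarith
  have key : ∀ V : ℂ × ℂ → ℂ,
      (∀ p ∈ ball (0 : ℂ × ℂ) r, ∀ q ∈ ball (0 : ℂ × ℂ) r, ‖V p - V q‖ ≤ Dh * ‖p - q‖) →
      V 0 = 0 → ∀ Y ∈ D, ‖V (Φ Y, Y)‖ ≤ Dh * β + Dh * (1 + γ₀) * ‖Y‖ := by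
    intro V lipV hV0 Y hY
    have h1 : ‖V (Φ Y, Y) - V (Φ 0, 0)‖ ≤ Dh * (1 + γ₀) * ‖Y‖ := by
      refine le_trans (lipV _ (hmem Y hY) _ (hmem 0 h0D)) ?_
      have hp := hpair Y hY 0 h0D
      rw [sub_zero] at hp
      nlinarith [mul_le_mul_of_nonneg_left hp hDh]
    have h2 : ‖V (Φ 0, 0)‖ ≤ Dh * β := by
      have h3 := lipV _ (hmem 0 h0D) _ h0r
      simp only [hV0, sub_zero] at h3
      have h4 : ‖((Φ 0, 0) : ℂ × ℂ)‖ ≤ β := by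
        rw [Prod.norm_def]
        simp only [norm_zero]
        exact max_le hΦ0 hβ
      exact le_trans h3 (mul_le_mul_of_nonneg_left h4 hDh)
    calc ‖V (Φ Y, Y)‖ = ‖(V (Φ Y, Y) - V (Φ 0, 0)) + V (Φ 0, 0)‖ := by ring_nf
      _ ≤ ‖V (Φ Y, Y) - V (Φ 0, 0)‖ + ‖V (Φ 0, 0)‖ := norm_add_le _ _
      _ ≤ Dh * β + Dh * (1 + γ₀) * ‖Y‖ := by linarith
  have keyR := key R lipR hR0
  have keyU := key U lipU hU0
  set T : ℂ → ℂ := fun Y => B * Y + U (Φ Y, Y) with hT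
  set S : ℂ → ℂ := fun Y => A * Φ Y + R (Φ Y, Y) with hS
  have hgim : ∀ Y, g (Φ Y, Y) = (S Y, T Y) := by
    intro Y; rw [hg]
  have hUlip : ∀ Y₁ ∈ D, ∀ Y₂ ∈ D,
      ‖U (Φ Y₁, Y₁) - U (Φ Y₂, Y₂)‖ ≤ Dh * (1 + γ₀) * ‖Y₁ - Y₂‖ := by
    intro Y₁ h₁ Y₂ h₂
    refine le_trans (lipU _ (hmem Y₁ h₁) _ (hmem Y₂ h₂)) ?_
    nlinarith [mul_le_mul_of_nonneg_left (hpair Y₁ h₁ Y₂ h₂) hDh]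
  have hTc : ∀ Y₁ ∈ D, ∀ Y₂ ∈ D, (‖B‖ - Dh * (1 + γ₀)) * ‖Y₁ - Y₂‖ ≤ ‖T Y₁ - T Y₂‖ := by
    intro Y₁ h₁ Y₂ h₂
    have hU' := hUlip Y₁ h₁ Y₂ h₂
    have hTe : T Y₁ - T Y₂ = B * (Y₁ - Y₂) + (U (Φ Y₁, Y₁) - U (Φ Y₂, Y₂)) := by
      simp only [hT]; ring
    have h3 : ‖B * (Y₁ - Y₂)‖ ≤ ‖T Y₁ - T Y₂‖ + ‖U (Φ Y₁, Y₁) - U (Φ Y₂, Y₂)‖ := by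
      rw [hTe]
      calc ‖B * (Y₁ - Y₂)‖
          = ‖(B * (Y₁ - Y₂) + (U (Φ Y₁, Y₁) - U (Φ Y₂, Y₂)))
              - (U (Φ Y₁, Y₁) - U (Φ Y₂, Y₂))‖ := by ring_nf
        _ ≤ _ := norm_sub_le _ _
    rw [norm_mul] at h3
    nlinarith
  have hTinj : ∀ Y₁ ∈ D, ∀ Y₂ ∈ D, T Y₁ = T Y₂ → Y₁ = Y₂ := by
    intro Y₁ h₁ Y₂ h₂ he
    have h := hTc Y₁ h₁ Y₂ h₂
    rw [he, sub_self, norm_zero] at h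
    have : ‖Y₁ - Y₂‖ = 0 := by nlinarith [norm_nonneg (Y₁ - Y₂)]
    rwa [norm_sub_eq_zero_iff] at this
  set Ψ : ℂ → ℂ := fun y => if h : ∃ Y, Y ∈ D ∧ T Y = y then S h.choose else 0 with hΨ
  have hΨval : ∀ Y ∈ D, Ψ (T Y) = S Y := by
    intro Y hY
    have hex : ∃ Y', Y' ∈ D ∧ T Y' = T Y := ⟨Y, hY, rfl⟩
    simp only [hΨ, dif_pos hex]
    obtain ⟨h1, h2⟩ := hex.choose_spec
    rw [hTinj _ h1 _ hY h2]
  have himg : g '' graphOf Φ D = (fun Y => ((S Y, T Y) : ℂ × ℂ)) '' D := by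
    rw [graphOf, Set.image_image]
    exact Set.image_congr fun Y _ => hgim Y
  have hsnd : Prod.snd '' (g '' graphOf Φ D) = T '' D := by
    rw [himg, Set.image_image]
  refine ⟨Ψ, ?_, ?_, ?_⟩
  · -- graph property
    rw [hsnd, himg, graphOf, Set.image_image]
    exact Set.image_congr fun Y hY => by rw [hΨval Y hY]
  · -- ball containment
    rw [hsnd]
    intro y hy
    rw [mem_ball_zero_iff] at hy
    have hρ : ‖y‖ + Dh * β < (‖B‖ - Dh * (1 + γ₀)) * α := by
      nlinarith [mul_nonneg hApos.le hβ, mul_nonneg hM (sq_nonneg β)]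
    set α' : ℝ := (‖y‖ + Dh * β) / (‖B‖ - Dh * (1 + γ₀)) with hα'
    have hα'0 : 0 ≤ α' := div_nonneg (by positivity) hcpos.le
    have hα'α : α' < α := by
      rw [hα', div_lt_iff₀ hcpos]
      nlinarith
    have hcα' : (‖B‖ - Dh * (1 + γ₀)) * α' = ‖y‖ + Dh * β := by
      rw [hα']; exact mul_div_cancel₀ _ (ne_of_gt hcpos)
    have hKD : closedBall (0:ℂ) α' ⊆ D :=
      subset_trans (closedBall_subset_ball hα'α) hbD
    set F : ℂ → ℂ := fun Y => B⁻¹ * (y - U (Φ Y, Y)) with hF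
    have hFmaps : ∀ Y ∈ closedBall (0:ℂ) α', F Y ∈ closedBall (0:ℂ) α' := by
      intro Y hY
      have hYD := hKD hY
      have hYn : ‖Y‖ ≤ α' := mem_closedBall_zero_iff.mp hY
      rw [mem_closedBall_zero_iff]
      have hU := keyU Y hYD
      have h1 : ‖F Y‖ = ‖B‖⁻¹ * ‖y - U (Φ Y, Y)‖ := by
        rw [hF]; simp [norm_mul]
      have h2 : ‖y - U (Φ Y, Y)‖ ≤ ‖B‖ * α' := by
        calc ‖y - U (Φ Y, Y)‖ ≤ ‖y‖ + ‖U (Φ Y, Y)‖ := norm_sub_le _ _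
          _ ≤ ‖y‖ + (Dh * β + Dh * (1 + γ₀) * ‖Y‖) := by linarith
          _ ≤ ‖y‖ + Dh * β + Dh * (1 + γ₀) * α' := by
              nlinarith [mul_le_mul_of_nonneg_left hYn
                (mul_nonneg hDh hγ₀'.le)]
          _ = ‖B‖ * α' := by rw [← hcα']; ring
      rw [h1]
      calc ‖B‖⁻¹ * ‖y - U (Φ Y, Y)‖ ≤ ‖B‖⁻¹ * (‖B‖ * α') :=
            mul_le_mul_of_nonneg_left h2 (by positivity)
        _ = α' := by rw [← mul_assoc, inv_mul_cancel₀ (ne_of_gt hBpos), one_mul]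
    have hFlip : ∀ Y₁ ∈ D, ∀ Y₂ ∈ D,
        ‖F Y₁ - F Y₂‖ ≤ Dh * ‖B‖⁻¹ * (1 + γ₀) * ‖Y₁ - Y₂‖ := by
      intro Y₁ h₁ Y₂ h₂
      have hd : F Y₁ - F Y₂ = B⁻¹ * (U (Φ Y₂, Y₂) - U (Φ Y₁, Y₁)) := by
        rw [hF]; ring
      rw [hd, norm_mul, norm_inv]
      have := hUlip Y₂ h₂ Y₁ h₁
      rw [norm_sub_rev Y₂ Y₁] at this
      calc ‖B‖⁻¹ * ‖U (Φ Y₂, Y₂) - U (Φ Y₁, Y₁)‖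
          ≤ ‖B‖⁻¹ * (Dh * (1 + γ₀) * ‖Y₁ - Y₂‖) :=
            mul_le_mul_of_nonneg_left this (by positivity)
        _ = Dh * ‖B‖⁻¹ * (1 + γ₀) * ‖Y₁ - Y₂‖ := by ring
    haveI : Nonempty (closedBall (0:ℂ) α') := ⟨⟨0, mem_closedBall_self hα'0⟩⟩
    haveI : CompleteSpace (closedBall (0:ℂ) α') :=
      IsClosed.completeSpace_coe (hs := isClosed_closedBall)
    set k : NNReal := Real.toNNReal (Dh * ‖B‖⁻¹ * (1 + γ₀)) with hk
    have hkco : (k : ℝ) = Dh * ‖B‖⁻¹ * (1 + γ₀) :=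
      Real.coe_toNNReal _ (by positivity)
    set f : closedBall (0:ℂ) α' → closedBall (0:ℂ) α' :=
      fun x => ⟨F x, hFmaps x x.2⟩ with hf
    have hcontr : ContractingWith k f := by
      constructor
      · exact_mod_cast hkco ▸ hsmall
      · apply LipschitzWith.of_dist_le_mul
        intro x y'
        rw [Subtype.dist_eq, Subtype.dist_eq, dist_eq_norm, dist_eq_norm, hkco]
        exact hFlip x (hKD x.2) y' (hKD y'.2)
    set x := ContractingWith.fixedPoint f hcontr with hx
    have hfix : F (x : ℂ) = (x : ℂ) :=
      congrArg Subtype.val (hcontr.fixedPoint_isFixedPt)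
    refine ⟨(x : ℂ), hKD x.2, ?_⟩
    have hBx : B * (x : ℂ) = y - U (Φ (x : ℂ), (x : ℂ)) := by
      have h1 : B * F (x : ℂ) = y - U (Φ (x : ℂ), (x : ℂ)) := by
        rw [hF]
        field_simp
      rw [hfix] at h1
      exact h1
    simp only [hT]
    rw [hBx]; ring
  · -- size of Ψ 0
    by_cases hex : ∃ Y, Y ∈ D ∧ T Y = 0
    · obtain ⟨hY₀D, hY₀T⟩ := hex.choose_spec
      set Y₀ := hex.choose with hY₀
      have hΨ0 : Ψ 0 = S Y₀ := by simp only [hΨ, dif_pos hex]; rfl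
      have hUb := keyU Y₀ hY₀D
      have hBY₀ : ‖B‖ * ‖Y₀‖ = ‖U (Φ Y₀, Y₀)‖ := by
        have he : B * Y₀ = -(U (Φ Y₀, Y₀)) := by
          have := hY₀T
          simp only [hT] at this
          linear_combination this
        rw [← norm_mul, he, norm_neg]
      have hY₀n : (‖B‖ - Dh * (1 + γ₀)) * ‖Y₀‖ ≤ Dh * β := by nlinarith
      have hΦb : ‖Φ Y₀‖ ≤ β + γ₀ * ‖Y₀‖ := by
        have h1 := hlip Y₀ hY₀D 0 h0D
        rw [sub_zero] at h1
        calc ‖Φ Y₀‖ = ‖(Φ Y₀ - Φ 0) + Φ 0‖ := by ring_nf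
          _ ≤ ‖Φ Y₀ - Φ 0‖ + ‖Φ 0‖ := norm_add_le _ _
          _ ≤ β + γ₀ * ‖Y₀‖ := by linarith
      have hRb := keyR Y₀ hY₀D
      have hSb : ‖S Y₀‖ ≤ ‖A‖ * β + Dh * β + (‖A‖ * γ₀ + Dh * (1 + γ₀)) * ‖Y₀‖ := by
        calc ‖S Y₀‖ ≤ ‖A * Φ Y₀‖ + ‖R (Φ Y₀, Y₀)‖ := norm_add_le _ _
          _ = ‖A‖ * ‖Φ Y₀‖ + ‖R (Φ Y₀, Y₀)‖ := by rw [norm_mul]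
          _ ≤ ‖A‖ * (β + γ₀ * ‖Y₀‖) + (Dh * β + Dh * (1 + γ₀) * ‖Y₀‖) := by
              have := mul_le_mul_of_nonneg_left hΦb hApos.le
              linarith
          _ = ‖A‖ * β + Dh * β + (‖A‖ * γ₀ + Dh * (1 + γ₀)) * ‖Y₀‖ := by ring
      -- key smallness estimate
      have hn0 : (0:ℝ) ≤ ‖Y₀‖ := norm_nonneg _
      have hBn : ‖B‖ * ‖Y₀‖ ≤ 4 / 3 * (Dh * β) := by nlinarith
      have hDhB : Dh ≤ ‖B‖ / 4 := le_trans hDh4 (by linarith)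
      have p1 : 4 / 3 * Dh * (‖A‖ * γ₀) ≤ 1 / 2 * (γ₀ * ‖A‖ * ‖B‖) := by
        nlinarith [mul_le_mul_of_nonneg_left hDhB (mul_nonneg hγ₀.le hApos.le),
          mul_pos (mul_pos hγ₀ hApos) hBpos]
      have p2 : 4 / 3 * (Dh ^ 2 * (1 + γ₀)) ≤ 1 / 2 * (γ₀ * ‖A‖ * ‖B‖) := by
        linarith [hε2, mul_le_mul_of_nonneg_left
          (mul_le_mul hγA hBγ hγpos.le hApos.le) hγ₀.le,
          mul_pos (mul_pos hγ₀ hApos) hBpos]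
      have hg' : 4 / 3 * Dh * (‖A‖ * γ₀ + Dh * (1 + γ₀)) ≤ γ₀ * ‖A‖ * ‖B‖ := by
        nlinarith [p1, p2]
      have hkey : (‖A‖ * γ₀ + Dh * (1 + γ₀)) * ‖Y₀‖ ≤ γ₀ * (‖A‖ * β) := by
        have hX : (0:ℝ) ≤ ‖A‖ * γ₀ + Dh * (1 + γ₀) := by positivity
        have hmain : ‖B‖ * ((‖A‖ * γ₀ + Dh * (1 + γ₀)) * ‖Y₀‖)
            ≤ ‖B‖ * (γ₀ * (‖A‖ * β)) := by
          nlinarith [mul_le_mul_of_nonneg_left hBn hX,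
            mul_le_mul_of_nonneg_right hg' hβ, hn0, hX]
        exact le_of_mul_le_mul_left hmain hBpos
      rw [hΨ0]
      have hMβ : (0:ℝ) ≤ M * β ^ 2 := mul_nonneg hM (sq_nonneg β)
      linarith [hSb, hkey, hMβ, mul_nonneg hγ₀.le (mul_nonneg hDh hβ),
        mul_nonneg hγ₀.le hMβ]
    · simp only [hΨ, dif_neg hex, norm_zero]
      positivity
end
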